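/- arXiv:2502.00150 — 3 statements merged into one kernel-verified Lean document; each statement's English description precedes it below -/
import Mathlib

section
/- If M and N are positive semidefinite Hermitian n×n matrices with M ⪰ N in the Loewner order, then 0 ≤ logdet(I + M) − logdet(I + N) ≤ logdet(I + M − N). -/
open Matrix
open scoped MatrixOrder


lemma aux_one_le_det_one_add {n : ℕ} {P : Matrix (Fin n) (Fin n) ℝ} (hP : P.PosSemidef) :
    1 ≤ (1 + P).det := by
  have hH := hP.isHermitian
  set U : Matrix (Fin n) (Fin n) ℝ := (hH.eigenvectorUnitary : Matrix (Fin n) (Fin n) ℝ) with hU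
  have hUU : U * star U = 1 := (Matrix.mem_unitaryGroup_iff).mp hH.eigenvectorUnitary.2
  have key : 1 + P = U * (1 + diagonal (RCLike.ofReal ∘ hH.eigenvalues)) * star U := by
    rw [Matrix.mul_add, Matrix.add_mul, Matrix.mul_one, hUU]
    congr 1
    exact hH.spectral_theorem
  rw [key, det_mul_right_comm, hUU, Matrix.one_mul]
  have : (1 : Matrix (Fin n) (Fin n) ℝ) + diagonal (RCLike.ofReal ∘ hH.eigenvalues)
      = diagonal (fun i => 1 + hH.eigenvalues i) := by
    rw [← diagonal_one, diagonal_add]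
    rfl
  rw [this, det_diagonal]
  calc (1:ℝ) = ∏ _i : Fin n, 1 := by simp
    _ ≤ ∏ i, (1 + hH.eigenvalues i) := by
        refine Finset.prod_le_prod (fun i _ => zero_le_one) fun i _ => ?_
        linarith [hP.eigenvalues_nonneg i]

lemma aux_det_le_det_add {n : ℕ} {X Y : Matrix (Fin n) (Fin n) ℝ}
    (hX : X.PosDef) (hY : Y.PosSemidef) : X.det ≤ (X + Y).det := by
  have hXs := hX.posSemidef
  set S := CFC.sqrt X with hSdef
  have hS : S.PosSemidef := (CFC.sqrt_nonneg X).posSemidef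
  have hSS : S * S = X := CFC.sqrt_mul_sqrt_self X hXs.nonneg
  have hdetS : S.det * S.det = X.det := by rw [← det_mul, hSS]
  have hdS : S.det ≠ 0 := by
    intro h; rw [h, mul_zero] at hdetS; exact hX.det_pos.ne (hdetS)
  have hSu : IsUnit S.det := hdS.isUnit
  have hSinv : S * S⁻¹ = 1 := mul_nonsing_inv S hSu
  have hSinv' : S⁻¹ * S = 1 := nonsing_inv_mul S hSu
  have hSinvH : S⁻¹ᴴ = S⁻¹ := by rw [conjTranspose_nonsing_inv, hS.isHermitian.eq]
  have hC : (S⁻¹ * Y * S⁻¹).PosSemidef := by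
    have := hY.mul_mul_conjTranspose_same S⁻¹
    rwa [hSinvH] at this
  have key : X + Y = S * (1 + S⁻¹ * Y * S⁻¹) * S := by
    rw [Matrix.mul_add, Matrix.mul_one, Matrix.add_mul, hSS]
    congr 1
    rw [← Matrix.mul_assoc, ← Matrix.mul_assoc, hSinv, Matrix.one_mul, Matrix.mul_assoc, hSinv',
      Matrix.mul_one]
  rw [key, det_mul, det_mul, mul_comm, ← mul_assoc, hdetS]
  nth_rewrite 1 [← mul_one X.det]
  exact mul_le_mul_of_nonneg_left (aux_one_le_det_one_add hC) hX.det_pos.le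
/-- If `M ⪰ N ⪰ 0` are Hermitian (real symmetric) PSD matrices, then
`0 ≤ logdet(I + M) − logdet(I + N) ≤ logdet(I + M − N)`. -/
theorem stmt1 (n : ℕ) (M N : Matrix (Fin n) (Fin n) ℝ)
    (hM : M.PosSemidef) (hN : N.PosSemidef) (hMN : (M - N).PosSemidef) :
    0 ≤ Real.log (1 + M).det - Real.log (1 + N).det ∧
      Real.log (1 + M).det - Real.log (1 + N).det ≤ Real.log (1 + (M - N)).det := by
  have hIN : (1 + N).PosDef := Matrix.PosDef.one.add_posSemidef hN
  have hIM : (1 + M).PosDef := Matrix.PosDef.one.add_posSemidef hM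
  have hIA : (1 + (M - N)).PosDef := Matrix.PosDef.one.add_posSemidef hMN
  have hsum : (1 + N) + (M - N) = 1 + M := by abel
  have step1 : (1 + N).det ≤ (1 + M).det := by
    have := aux_det_le_det_add hIN hMN
    rwa [hsum] at this
  obtain ⟨S, hS, hSS⟩ : ∃ S : Matrix (Fin n) (Fin n) ℝ, S.PosSemidef ∧ S * S = 1 + N :=
    ⟨CFC.sqrt (1 + N), (CFC.sqrt_nonneg (1 + N)).posSemidef, CFC.sqrt_mul_sqrt_self (1 + N) hIN.posSemidef.nonneg⟩
  obtain ⟨R, hR, hRR⟩ : ∃ R : Matrix (Fin n) (Fin n) ℝ, R.PosSemidef ∧ R * R = M - N :=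
    ⟨CFC.sqrt (M - N), (CFC.sqrt_nonneg (M - N)).posSemidef, CFC.sqrt_mul_sqrt_self (M - N) hMN.nonneg⟩
  have hdetS : S.det * S.det = (1 + N).det := by rw [← Matrix.det_mul, hSS]
  have hdS : S.det ≠ 0 := by
    intro h; rw [h, mul_zero] at hdetS; exact hIN.det_pos.ne hdetS
  have hSu : IsUnit S.det := hdS.isUnit
  have hSinv : S * S⁻¹ = 1 := Matrix.mul_nonsing_inv S hSu
  have hSinv' : S⁻¹ * S = 1 := Matrix.nonsing_inv_mul S hSu
  have hSinvH : S⁻¹ᴴ = S⁻¹ := by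
    rw [Matrix.conjTranspose_nonsing_inv, hS.isHermitian.eq]
  -- factorization : 1 + M = S * (1 + S⁻¹ * (M-N) * S⁻¹) * S
  have key : 1 + M = S * ((1 : Matrix (Fin n) (Fin n) ℝ) + S⁻¹ * (M - N) * S⁻¹) * S := by
    rw [Matrix.mul_add, Matrix.mul_one, Matrix.add_mul, hSS]
    rw [← Matrix.mul_assoc, ← Matrix.mul_assoc, hSinv, Matrix.one_mul, Matrix.mul_assoc _ S⁻¹ S,
      hSinv', Matrix.mul_one, hsum]
  set C := R * S⁻¹ * (S⁻¹ * R) with hCdef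
  have hmid : ((1 : Matrix (Fin n) (Fin n) ℝ) + S⁻¹ * (M - N) * S⁻¹).det
      = ((1 : Matrix (Fin n) (Fin n) ℝ) + C).det := by
    rw [hCdef, ← Matrix.det_one_add_mul_comm (S⁻¹ * R) (R * S⁻¹)]
    congr 2
    rw [← hRR]
    simp only [Matrix.mul_assoc]
  have hC : C.PosSemidef := by
    have h1 : (S⁻¹ * R)ᴴ = R * S⁻¹ := by
      rw [Matrix.conjTranspose_mul, hSinvH, hR.isHermitian.eq]
    have := Matrix.posSemidef_conjTranspose_mul_self (S⁻¹ * R)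
    rwa [h1] at this
  have hICpd : ((1 : Matrix (Fin n) (Fin n) ℝ) + C).PosDef := Matrix.PosDef.one.add_posSemidef hC
  have h0 : S⁻¹ * (1 + N) * S⁻¹ = 1 := by
    rw [← hSS, ← Matrix.mul_assoc, hSinv', Matrix.one_mul, hSinv]
  have hone_sub : (1 : Matrix (Fin n) (Fin n) ℝ) - S⁻¹ * S⁻¹ = S⁻¹ * N * S⁻¹ := by
    have hNsub : N = (1 + N) - 1 := by abel
    rw [hNsub, Matrix.mul_sub, Matrix.sub_mul, h0, Matrix.mul_one]
  have hD : ((M - N) - C).PosSemidef := by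
    have hmn : (M - N) - C = Rᴴ * ((1 : Matrix (Fin n) (Fin n) ℝ) - S⁻¹ * S⁻¹) * R := by
      rw [hR.isHermitian.eq, Matrix.mul_sub, Matrix.sub_mul, Matrix.mul_one, hRR, hCdef]
      congr 1
      simp only [Matrix.mul_assoc]
    rw [hmn]
    refine Matrix.PosSemidef.conjTranspose_mul_mul_same ?_ R
    rw [hone_sub]
    have := hN.mul_mul_conjTranspose_same S⁻¹
    rwa [hSinvH] at this
  have step2 : (1 + M).det ≤ (1 + N).det * (1 + (M - N)).det := by
    have h1 : (1 + M).det = (1 + N).det * ((1 : Matrix (Fin n) (Fin n) ℝ) + C).det := by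
      rw [key, Matrix.det_mul, Matrix.det_mul, hmid, mul_comm _ S.det, ← mul_assoc, hdetS]
    have h2 : ((1 : Matrix (Fin n) (Fin n) ℝ) + C).det ≤ (1 + (M - N)).det := by
      have := aux_det_le_det_add hICpd hD
      have he : (1 : Matrix (Fin n) (Fin n) ℝ) + C + ((M - N) - C) = 1 + (M - N) := by abel
      rwa [he] at this
    rw [h1]
    exact mul_le_mul_of_nonneg_left h2 hIN.det_pos.le
  constructor
  · have := Real.log_le_log hIN.det_pos step1
    linarith
  · have h3 : Real.log (1 + M).det ≤ Real.log ((1 + N).det * (1 + (M - N)).det) :=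
      Real.log_le_log hIM.det_pos step2
    rw [Real.log_mul hIN.det_pos.ne' hIA.det_pos.ne'] at h3
    linarith
end

section
/- Let Z be a real matrix of size m×N, and let Γ_mod = blkdiag(B, Q) where B and Q are symmetric positive semidefinite blocks partitioning the N coordinates. Then 0 ≤ logdet(I + Z Γ_mod Zᵀ) − logdet(I + Z blkdiag(B, 0) Zᵀ) ≤ logdet(I + Z blkdiag(0, Q) Zᵀ). -/
open Matrix
open scoped MatrixOrder

section Aux

variable {n : Type*} [Fintype n] [DecidableEq n]

private lemma aux_one_le_det_one_add_s8 {M : Matrix n n ℝ}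
    (hM : M.PosSemidef) : 1 ≤ (1 + M).det := by
  have hH := hM.1
  set U : Matrix n n ℝ := (hH.eigenvectorUnitary : Matrix n n ℝ) with hU
  set D : Matrix n n ℝ := diagonal (RCLike.ofReal ∘ hH.eigenvalues) with hD
  have hUU : U * star U = 1 := (Matrix.mem_unitaryGroup_iff).mp hH.eigenvectorUnitary.2
  have key : (1 + M) = U * ((1 : Matrix n n ℝ) + D) * star U := by
    rw [mul_add, mul_one, add_mul, hUU]
    conv_lhs => rw [hH.spectral_theorem, Unitary.conjStarAlgAut_apply]
  have h1 : U.det * (star U).det = 1 := by rw [← det_mul, hUU, det_one]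
  have hdet : (1 + M).det = ((1 : Matrix n n ℝ) + D).det := by
    rw [key, det_mul, det_mul, mul_right_comm, h1, one_mul]
  have h2 : (1 : Matrix n n ℝ) + D = diagonal (fun i => 1 + hH.eigenvalues i) := by
    rw [hD, ← diagonal_one, diagonal_add]
    congr 1
  rw [hdet, h2, det_diagonal]
  calc (1:ℝ) = ∏ _i : n, 1 := by simp
  _ ≤ _ := Finset.prod_le_prod (by intros; norm_num) (fun i _ => by
      have := hM.eigenvalues_nonneg i; linarith)

private lemma aux_det_le_det_add_s8 {P Y : Matrix n n ℝ}
    (hP : P.PosDef) (hY : Y.PosSemidef) : P.det ≤ (P + Y).det := by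
  set S : Matrix n n ℝ := CFC.sqrt P with hSdef
  have hS : S.PosSemidef := (CFC.sqrt_nonneg P).posSemidef
  have hSS : S * S = P := CFC.sqrt_mul_sqrt_self P hP.posSemidef.nonneg
  have hdetS : S.det * S.det = P.det := by rw [← det_mul, hSS]
  have hdetP : 0 < P.det := hP.det_pos
  have hdS : IsUnit S.det := by
    refine isUnit_iff_ne_zero.mpr fun h => ?_
    rw [h, mul_zero] at hdetS; linarith
  have hSi : S * S⁻¹ = 1 := mul_nonsing_inv S hdS
  have hiS : S⁻¹ * S = 1 := nonsing_inv_mul S hdS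
  have hSinvH : (S⁻¹)ᴴ = S⁻¹ := hS.1.inv.eq
  set K : Matrix n n ℝ := S⁻¹ * Y * S⁻¹ with hKdef
  have hK : K.PosSemidef := by
    have := hY.mul_mul_conjTranspose_same S⁻¹
    rwa [hSinvH] at this
  have key : P + Y = S * ((1 : Matrix n n ℝ) + K) * S := by
    rw [mul_add, mul_one, add_mul, hSS, hKdef]
    congr 1
    symm
    calc S * (S⁻¹ * Y * S⁻¹) * S = (S * S⁻¹) * Y * (S⁻¹ * S) := by
          simp only [Matrix.mul_assoc]
    _ = Y := by rw [hSi, hiS, Matrix.one_mul, Matrix.mul_one]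
  have : (P + Y).det = P.det * ((1 : Matrix n n ℝ) + K).det := by
    rw [key, det_mul, det_mul, mul_right_comm, ← hdetS]
  rw [this]
  nlinarith [aux_one_le_det_one_add_s8 hK]

private lemma aux_det_one_add_add_le {A C : Matrix n n ℝ}
    (hA : A.PosSemidef) (hC : C.PosSemidef) :
    (1 + (A + C)).det ≤ (1 + A).det * (1 + C).det := by
  set P : Matrix n n ℝ := 1 + A with hPdef
  have hP : P.PosDef := Matrix.PosDef.one.add_posSemidef hA
  have hdP : IsUnit P.det := isUnit_iff_ne_zero.mpr (ne_of_gt hP.det_pos)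
  have hPi : P * P⁻¹ = 1 := mul_nonsing_inv P hdP
  have hiP : P⁻¹ * P = 1 := nonsing_inv_mul P hdP
  have hPinvH : (P⁻¹)ᴴ = P⁻¹ := hP.1.inv.eq
  set R : Matrix n n ℝ := CFC.sqrt C with hRdef
  have hR : R.PosSemidef := (CFC.sqrt_nonneg C).posSemidef
  have hRH : Rᴴ = R := hR.1.eq
  have hRR : R * R = C := CFC.sqrt_mul_sqrt_self C hC.nonneg
  have e1 : 1 + (A + C) = P * (1 + P⁻¹ * C) := by
    rw [mul_add, mul_one, ← Matrix.mul_assoc, hPi, Matrix.one_mul, hPdef, add_assoc]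
  have e2 : ((1 : Matrix n n ℝ) + P⁻¹ * C).det = ((1 : Matrix n n ℝ) + R * (P⁻¹ * R)).det := by
    rw [← hRR, ← Matrix.mul_assoc, Matrix.det_one_add_mul_comm]
  have step1 : (1 + (A + C)).det = P.det * ((1 : Matrix n n ℝ) + R * P⁻¹ * R).det := by
    rw [e1, det_mul, e2, Matrix.mul_assoc]
  have hK : (R * P⁻¹ * R).PosSemidef := by
    have := hP.inv.posSemidef.conjTranspose_mul_mul_same R
    rwa [hRH] at this
  have hone_sub : (1 : Matrix n n ℝ) - P⁻¹ = P⁻¹ * A := by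
    have : P⁻¹ * (1 + A) = 1 := by rw [← hPdef, hiP]
    rw [mul_add, mul_one] at this
    exact (eq_sub_of_add_eq' this).symm
  have hPA : (P⁻¹ * A).PosSemidef := by
    have h1 : (A + A * A).PosSemidef :=
      hA.add (by have h := Matrix.posSemidef_conjTranspose_mul_self A; rwa [hA.1.eq] at h)
    have h2 : (P⁻¹ * (A + A * A) * (P⁻¹)ᴴ).PosSemidef := h1.mul_mul_conjTranspose_same P⁻¹
    rw [hPinvH] at h2
    have e : P⁻¹ * (A + A * A) * P⁻¹ = P⁻¹ * A := by
      have : A + A * A = A * P := by rw [hPdef, mul_add, mul_one]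
      rw [this, ← Matrix.mul_assoc, Matrix.mul_assoc (P⁻¹ * A), hPi, Matrix.mul_one]
    rwa [e] at h2
  have hY : (R * (P⁻¹ * A) * R).PosSemidef := by
    have := hPA.conjTranspose_mul_mul_same R
    rwa [hRH] at this
  have hsum : (1 + R * P⁻¹ * R) + R * (P⁻¹ * A) * R = 1 + C := by
    rw [← hone_sub, Matrix.mul_sub, Matrix.sub_mul, Matrix.mul_one, hRR]
    abel
  have step2 : ((1 : Matrix n n ℝ) + R * P⁻¹ * R).det ≤ (1 + C).det := by
    rw [← hsum]
    exact aux_det_le_det_add_s8 (Matrix.PosDef.one.add_posSemidef hK) hY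
  rw [step1]
  calc P.det * ((1 : Matrix n n ℝ) + R * P⁻¹ * R).det ≤ P.det * (1 + C).det :=
        mul_le_mul_of_nonneg_left step2 (le_of_lt hP.det_pos)
  _ = (1 + A).det * (1 + C).det := by rw [hPdef]

end Aux

private lemma aux_fromBlocks_psd {p q : ℕ} {B : Matrix (Fin p) (Fin p) ℝ}
    {Q : Matrix (Fin q) (Fin q) ℝ} (hB : B.PosSemidef) (hQ : Q.PosSemidef) :
    (Matrix.fromBlocks B 0 0 Q).PosSemidef := by
  obtain ⟨W, hW⟩ : ∃ W, B = Wᴴ * W := CStarAlgebra.nonneg_iff_eq_star_mul_self.mp hB.nonneg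
  obtain ⟨V, hV⟩ : ∃ V, Q = Vᴴ * V := CStarAlgebra.nonneg_iff_eq_star_mul_self.mp hQ.nonneg
  have : Matrix.fromBlocks B 0 0 Q = (Matrix.fromBlocks W 0 0 V)ᴴ * Matrix.fromBlocks W 0 0 V := by
    rw [fromBlocks_conjTranspose, fromBlocks_multiply]
    simp only [Matrix.mul_zero, Matrix.zero_mul, add_zero, zero_add, conjTranspose_zero]
    rw [← hW, ← hV]
  rw [this]
  exact posSemidef_conjTranspose_mul_self _

/-- For `Γ_mod = blkdiag(B, Q)` with PSD blocks `B`, `Q`: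
`0 ≤ logdet(I + Z Γ_mod Zᵀ) − logdet(I + Z blkdiag(B,0) Zᵀ) ≤ logdet(I + Z blkdiag(0,Q) Zᵀ)`. -/
theorem stmt8 (m p q : ℕ) (Z : Matrix (Fin m) (Fin p ⊕ Fin q) ℝ)
    (B : Matrix (Fin p) (Fin p) ℝ) (Q : Matrix (Fin q) (Fin q) ℝ)
    (hB : B.PosSemidef) (hQ : Q.PosSemidef) :
    0 ≤ Real.log (1 + Z * Matrix.fromBlocks B 0 0 Q * Zᵀ).det -
        Real.log (1 + Z * Matrix.fromBlocks B 0 0 (0 : Matrix (Fin q) (Fin q) ℝ) * Zᵀ).det ∧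
      Real.log (1 + Z * Matrix.fromBlocks B 0 0 Q * Zᵀ).det -
        Real.log (1 + Z * Matrix.fromBlocks B 0 0 (0 : Matrix (Fin q) (Fin q) ℝ) * Zᵀ).det ≤
        Real.log (1 + Z * Matrix.fromBlocks (0 : Matrix (Fin p) (Fin p) ℝ) 0 0 Q * Zᵀ).det := by
  have hZT : Zᵀ = Zᴴ := (conjTranspose_eq_transpose_of_trivial Z).symm
  set A : Matrix (Fin m) (Fin m) ℝ := Z * Matrix.fromBlocks B 0 0 (0 : Matrix (Fin q) (Fin q) ℝ) * Zᵀ with hAdef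
  set C : Matrix (Fin m) (Fin m) ℝ := Z * Matrix.fromBlocks (0 : Matrix (Fin p) (Fin p) ℝ) 0 0 Q * Zᵀ with hCdef
  have hA : A.PosSemidef := by
    rw [hAdef, hZT]
    exact (aux_fromBlocks_psd hB Matrix.PosSemidef.zero).mul_mul_conjTranspose_same Z
  have hC : C.PosSemidef := by
    rw [hCdef, hZT]
    exact (aux_fromBlocks_psd Matrix.PosSemidef.zero hQ).mul_mul_conjTranspose_same Z
  have hsplit : Z * Matrix.fromBlocks B 0 0 Q * Zᵀ = A + C := by
    rw [hAdef, hCdef, ← Matrix.add_mul, ← Matrix.mul_add, fromBlocks_add]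
    simp
  have hdetA : 0 < (1 + A).det := (Matrix.PosDef.one.add_posSemidef hA).det_pos
  have hdetC : 0 < (1 + C).det := (Matrix.PosDef.one.add_posSemidef hC).det_pos
  have hdetAC : 0 < (1 + (A + C)).det :=
    (Matrix.PosDef.one.add_posSemidef (hA.add hC)).det_pos
  have hmono : (1 + A).det ≤ (1 + (A + C)).det := by
    rw [← add_assoc]
    exact aux_det_le_det_add_s8 (Matrix.PosDef.one.add_posSemidef hA) hC
  rw [hsplit]
  constructor
  · have := Real.log_le_log hdetA hmono
    linarith
  · have h1 := aux_det_one_add_add_le hA hC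
    have h2 := Real.log_le_log hdetAC h1
    rw [Real.log_mul (ne_of_gt hdetA) (ne_of_gt hdetC)] at h2
    linarith
end

section
/- Let V_Kᵀ S have full rank K where V_K ∈ ℝ^{n×K} contains the top K right singular vectors of A ∈ ℝ^{m×n}, S ∈ ℝ^{n×K} is a column selection matrix, and ζ = ‖(V_Kᵀ S)⁻¹‖₂. Then for each 1 ≤ j ≤ K, the j-th singular value of AS satisfies σ_j(AS) ≥ σ_j(A)/ζ, and consequently logdet(I + Sᵀ Aᵀ A S) ≥ logdet(I + Σ_K²/ζ²). -/
open Matrix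





lemma hlp1 {p q : ℕ} (P : Matrix (Fin p) (Fin q) ℝ) (N : Matrix (Fin p) (Fin p) ℝ)
    (x : Fin q → ℝ) : x ⬝ᵥ ((Pᵀ * N * P) *ᵥ x) = (P *ᵥ x) ⬝ᵥ (N *ᵥ (P *ᵥ x)) := by
  rw [← mulVec_mulVec, ← mulVec_mulVec, dotProduct_mulVec, vecMul_transpose]

lemma hlp3 {q : ℕ} (x : Fin q → ℝ) (hx : x ≠ 0) : 0 < x ⬝ᵥ x :=
  lt_of_le_of_ne (Finset.sum_nonneg fun _ _ => mul_self_nonneg _)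
    (fun h => hx (dotProduct_self_eq_zero.mp h.symm))

-- quadratic form in eigencoordinates
lemma quad_eig {K : ℕ} (M : Matrix (Fin K) (Fin K) ℝ) (hM : M.IsHermitian)
    (x : Fin K → ℝ) :
    x ⬝ᵥ (M *ᵥ x) =
      ∑ k, hM.eigenvalues k * ((star (hM.eigenvectorUnitary : Matrix (Fin K) (Fin K) ℝ) *ᵥ x) k)^2 ∧
    x ⬝ᵥ x = ∑ k, ((star (hM.eigenvectorUnitary : Matrix (Fin K) (Fin K) ℝ) *ᵥ x) k)^2 := by
  set U : Matrix (Fin K) (Fin K) ℝ := (hM.eigenvectorUnitary : Matrix (Fin K) (Fin K) ℝ) with hU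
  have hUt : U = (star U)ᵀ := by
    rw [star_eq_conjTranspose, conjTranspose_eq_transpose_of_trivial, transpose_transpose]
  have hUU : U * star U = 1 := (Matrix.mem_unitaryGroup_iff).mp hM.eigenvectorUnitary.2
  set y := star U *ᵥ x with hy
  constructor
  · conv_lhs => rw [hM.spectral_theorem, Unitary.conjStarAlgAut_apply]
    have : (U * diagonal (RCLike.ofReal ∘ hM.eigenvalues) * star U)
        = (star U)ᵀ * diagonal hM.eigenvalues * star U := by
      rw [← hUt]; congr 1
    rw [this, hlp1]
    simp [dotProduct, mulVec_diagonal, pow_two, mul_comm, mul_assoc, mul_left_comm, hy]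
  · have : x ⬝ᵥ x = x ⬝ᵥ (((star U)ᵀ * 1 * star U) *ᵥ x) := by
      rw [mul_one, ← hUt, hUU, one_mulVec]
    rw [this, hlp1, one_mulVec]
    simp [dotProduct, pow_two, hy]

lemma cf_lower {K : ℕ} (M : Matrix (Fin K) (Fin K) ℝ) (hM : M.IsHermitian)
    (ν : Fin K → ℝ) (hν : Antitone ν) (e : Fin K ≃ Fin K) (hνe : ν = hM.eigenvalues ∘ e)
    (j : Fin K) (T : Submodule ℝ (Fin K → ℝ)) (hdim : (j : ℕ) + 1 ≤ Module.finrank ℝ T)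
    (c : ℝ) (hc : ∀ x ∈ T, c * (x ⬝ᵥ x) ≤ x ⬝ᵥ (M *ᵥ x)) : c ≤ ν j := by
  classical
  set U : Matrix (Fin K) (Fin K) ℝ := (hM.eigenvectorUnitary : Matrix (Fin K) (Fin K) ℝ) with hU
  set L : (Fin K → ℝ) →ₗ[ℝ] ({i : Fin K // i < j} → ℝ) :=
    LinearMap.pi (fun i => (LinearMap.proj (e i.val)).comp (Matrix.mulVecLin (star U)))
  have hker : K ≤ Module.finrank ℝ (LinearMap.ker L) + (j : ℕ) := by
    have h1 := LinearMap.finrank_range_add_finrank_ker L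
    have h2 : Module.finrank ℝ (LinearMap.range L) ≤ Fintype.card {i : Fin K // i < j} :=
      le_trans (Submodule.finrank_le _) (by rw [Module.finrank_fintype_fun_eq_card])
    have h3 : Fintype.card {i : Fin K // i < j} = (j : ℕ) := by
      rw [Fintype.card_subtype]
      rw [show Finset.filter (fun x => x < j) Finset.univ = Finset.Iio j by
        ext i; simp]
      exact Fin.card_Iio j
    rw [Module.finrank_fintype_fun_eq_card, Fintype.card_fin] at h1
    have hjK : (j : ℕ) < K := j.2
    omega
  -- intersection nontrivial
  have hint : T ⊓ LinearMap.ker L ≠ ⊥ := by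
    intro hbot
    have h4 := Submodule.finrank_sup_add_finrank_inf_eq T (LinearMap.ker L)
    rw [hbot, finrank_bot] at h4
    have h5 : Module.finrank ℝ (T ⊔ LinearMap.ker L : Submodule ℝ (Fin K → ℝ)) ≤ K := by
      have := Submodule.finrank_le (T ⊔ LinearMap.ker L : Submodule ℝ (Fin K → ℝ))
      rwa [Module.finrank_fintype_fun_eq_card, Fintype.card_fin] at this
    have hjK : (j : ℕ) < K := j.2
    omega
  obtain ⟨x, hxmem, hx0⟩ := Submodule.exists_mem_ne_zero_of_ne_bot hint
  obtain ⟨hxT, hxker⟩ := hxmem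
  set y := star U *ᵥ x with hy
  have hyzero : ∀ i : Fin K, i < j → y (e i) = 0 := by
    intro i hi
    have := congr_fun (LinearMap.mem_ker.mp hxker) ⟨i, hi⟩
    simpa [L, hy] using this
  obtain ⟨hq1, hq2⟩ := quad_eig M hM x
  have hsum1 : x ⬝ᵥ (M *ᵥ x) = ∑ i, ν i * (y (e i))^2 := by
    rw [hq1, ← Equiv.sum_comp e (fun k => hM.eigenvalues k * (y k)^2), hνe]
    rfl
  have hsum2 : x ⬝ᵥ x = ∑ i, (y (e i))^2 := by
    rw [hq2, ← Equiv.sum_comp e (fun k => (y k)^2)]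
  have hbound : x ⬝ᵥ (M *ᵥ x) ≤ ν j * (x ⬝ᵥ x) := by
    rw [hsum1, hsum2, Finset.mul_sum]
    apply Finset.sum_le_sum
    intro i _
    by_cases hi : i < j
    · rw [hyzero i hi]; simp
    · exact mul_le_mul_of_nonneg_right (hν (not_lt.mp hi)) (sq_nonneg _)
  have hpos := hlp3 x hx0
  have := le_trans (hc x hxT) hbound
  exact le_of_mul_le_mul_right this hpos




lemma hlp2 {p q : ℕ} (P : Matrix (Fin p) (Fin q) ℝ) (x : Fin q → ℝ) :
    0 ≤ x ⬝ᵥ ((Pᵀ * P) *ᵥ x) := by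
  rw [← mulVec_mulVec, dotProduct_mulVec, vecMul_transpose]
  exact Finset.sum_nonneg fun _ _ => mul_self_nonneg _


/-- GKS lower bound: if `V` holds the top-`K` right singular vectors of `A`
(columns of `V` are orthonormal eigenvectors of `AᵀA` for its `K` largest
eigenvalues `μ_1 ≥ … ≥ μ_K`, with `μ` the decreasing enumeration of the
eigenvalues of `AᵀA`), `S` is a column-selection matrix with `Vᵀ S` invertible,
and `ζ = ‖(Vᵀ S)⁻¹‖₂` (spectral norm), then `σ_j(AS) ≥ σ_j(A)/ζ` for `1 ≤ j ≤ K`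
(where `ν` is the decreasing enumeration of the eigenvalues of `(AS)ᵀ(AS)`, so
`σ_j(AS) = √(ν j)` and `σ_j(A) = √(μ j)`), and consequently
`logdet(I + Sᵀ Aᵀ A S) ≥ ∑_{j=1}^K log(1 + μ_j/ζ²)`. -/
theorem stmt13 (m n K : ℕ) (hK : K ≤ n)
    (A : Matrix (Fin m) (Fin n) ℝ)
    (hH : (Aᵀ * A).IsHermitian)
    (μ : Fin n → ℝ) (hμmono : Antitone μ)
    (hμperm : ∃ e : Fin n ≃ Fin n, μ = hH.eigenvalues ∘ e)
    (V : Matrix (Fin n) (Fin K) ℝ) (hVorth : Vᵀ * V = 1)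
    (hVeig : Aᵀ * A * V = V * Matrix.diagonal (fun j : Fin K => μ (Fin.castLE hK j)))
    (σsel : Fin K ↪ Fin n)
    (S : Matrix (Fin n) (Fin K) ℝ)
    (hS : S = Matrix.of fun i j => if i = σsel j then (1 : ℝ) else 0)
    (hfull : IsUnit (Vᵀ * S).det)
    (ζ : ℝ) (hζ : ζ = ‖Matrix.toEuclideanCLM (𝕜 := ℝ) ((Vᵀ * S)⁻¹)‖)
    (hHS : ((A * S)ᵀ * (A * S)).IsHermitian)
    (ν : Fin K → ℝ) (hνmono : Antitone ν)
    (hνperm : ∃ e : Fin K ≃ Fin K, ν = hHS.eigenvalues ∘ e) :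
    (∀ j : Fin K, Real.sqrt (μ (Fin.castLE hK j)) / ζ ≤ Real.sqrt (ν j)) ∧
      (∑ j : Fin K, Real.log (1 + μ (Fin.castLE hK j) / ζ ^ 2)) ≤
        Real.log (1 + Sᵀ * (Aᵀ * A) * S).det := by
  classical
  rcases Nat.eq_zero_or_pos K with hK0 | hKpos
  · subst hK0
    refine ⟨fun j => j.elim0, ?_⟩
    have : (1 + Sᵀ * (Aᵀ * A) * S).det = 1 := Matrix.det_fin_zero
    simp [this]
  -- K > 0
  haveI : Nonempty (Fin K) := Fin.pos_iff_nonempty.mp hKpos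
  obtain ⟨f, hf⟩ := hνperm
  obtain ⟨e, he⟩ := hμperm
  set W := Vᵀ * S with hW
  have hWinv : W⁻¹ * W = 1 := nonsing_inv_mul _ hfull
  have hW0 : W⁻¹ ≠ 0 := by
    intro h
    rw [h, zero_mul] at hWinv
    exact one_ne_zero hWinv.symm
  have hζpos : 0 < ζ := by
    rw [hζ]
    refine norm_pos_iff.mpr (fun h0 => hW0 ?_)
    exact Matrix.toEuclideanCLM.injective (h0.trans (map_zero _).symm)
  -- μ nonneg
  have hAAps : (Aᵀ * A).PosSemidef := by
    have := Matrix.posSemidef_conjTranspose_mul_self A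
    rwa [conjTranspose_eq_transpose_of_trivial] at this
  have hμnn : ∀ j : Fin K, 0 ≤ μ (Fin.castLE hK j) := by
    intro j
    rw [he]
    exact hAAps.eigenvalues_nonneg _
  -- ν nonneg
  have hASps : ((A * S)ᵀ * (A * S)).PosSemidef := by
    have := Matrix.posSemidef_conjTranspose_mul_self (A * S)
    rwa [conjTranspose_eq_transpose_of_trivial] at this
  have hνnn : ∀ j : Fin K, 0 ≤ ν j := by
    intro j
    rw [hf]
    exact hASps.eigenvalues_nonneg _
  set D := Matrix.diagonal (fun j : Fin K => μ (Fin.castLE hK j)) with hD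
  -- norm bound
  have hnorm : ∀ x : Fin K → ℝ, x ⬝ᵥ x ≤ ζ^2 * ((W *ᵥ x) ⬝ᵥ (W *ᵥ x)) := by
    intro x
    set z := W *ᵥ x with hz
    have hx : x = W⁻¹ *ᵥ z := by rw [hz, mulVec_mulVec, hWinv, one_mulVec]
    have h1 : ‖(WithLp.equiv 2 (Fin K → ℝ)).symm x‖ ≤ ζ * ‖(WithLp.equiv 2 (Fin K → ℝ)).symm z‖ := by
      have h2 : (WithLp.equiv 2 (Fin K → ℝ)).symm x =
          Matrix.toEuclideanCLM (𝕜 := ℝ) W⁻¹ ((WithLp.equiv 2 (Fin K → ℝ)).symm z) := by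
        rw [WithLp.equiv_symm_apply, Matrix.toEuclideanCLM_toLp, ← hx]
      rw [h2, hζ]
      exact (Matrix.toEuclideanCLM (𝕜 := ℝ) W⁻¹).le_opNorm _
    have e1 : x ⬝ᵥ x = ‖(WithLp.equiv 2 (Fin K → ℝ)).symm x‖ ^ 2 := by
      rw [EuclideanSpace.norm_eq, Real.sq_sqrt (Finset.sum_nonneg fun _ _ => sq_nonneg _)]
      simp [dotProduct, sq_abs, pow_two]
    have e2 : z ⬝ᵥ z = ‖(WithLp.equiv 2 (Fin K → ℝ)).symm z‖ ^ 2 := by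
      rw [EuclideanSpace.norm_eq, Real.sq_sqrt (Finset.sum_nonneg fun _ _ => sq_nonneg _)]
      simp [dotProduct, sq_abs, pow_two]
    calc x ⬝ᵥ x = ‖(WithLp.equiv 2 (Fin K → ℝ)).symm x‖ ^ 2 := e1
      _ ≤ (ζ * ‖(WithLp.equiv 2 (Fin K → ℝ)).symm z‖) ^ 2 := by
          exact pow_le_pow_left₀ (norm_nonneg _) h1 2
      _ = ζ^2 * (z ⬝ᵥ z) := by rw [e2, mul_pow]
  -- quadratic form inequality: V D Vᵀ ≤ AᵀA
  have hVDVt : ∀ y : Fin n → ℝ, y ⬝ᵥ ((V * D * Vᵀ) *ᵥ y) ≤ y ⬝ᵥ ((Aᵀ * A) *ᵥ y) := by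
    have htr : Vᵀ * (Aᵀ * A) = D * Vᵀ := by
      have := congrArg Matrix.transpose hVeig
      rwa [transpose_mul, transpose_mul, transpose_mul, transpose_transpose,
        diagonal_transpose] at this
    have key_id : (A * (1 - V * Vᵀ))ᵀ * (A * (1 - V * Vᵀ)) = Aᵀ * A - V * D * Vᵀ := by
      rw [transpose_mul]
      have hsym : (1 - V * Vᵀ)ᵀ = 1 - V * Vᵀ := by
        rw [transpose_sub, transpose_one, transpose_mul, transpose_transpose]
      rw [hsym]
      have e1 : (V * Vᵀ) * (Aᵀ * A) = V * D * Vᵀ := by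
        rw [Matrix.mul_assoc, htr, ← Matrix.mul_assoc]
      have e2 : (Aᵀ * A) * (V * Vᵀ) = V * D * Vᵀ := by
        rw [← Matrix.mul_assoc, hVeig]
      have e3 : V * D * Vᵀ * (V * Vᵀ) = V * D * Vᵀ := by
        rw [Matrix.mul_assoc (V * D) Vᵀ (V * Vᵀ), ← Matrix.mul_assoc Vᵀ V Vᵀ, hVorth, Matrix.one_mul]
      have goal1 : (1 - V * Vᵀ) * (Aᵀ * A) * (1 - V * Vᵀ) = Aᵀ * A - V * D * Vᵀ := by
        rw [mul_sub, mul_one, sub_mul, sub_mul, one_mul, e1, e2, e3]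
        abel
      rw [← Matrix.mul_assoc, Matrix.mul_assoc (1 - V * Vᵀ) Aᵀ A, goal1]
    intro y
    have := hlp2 (A * (1 - V * Vᵀ)) y
    rw [key_id, sub_mulVec, dotProduct_sub] at this
    linarith
  -- key inequality via Courant-Fischer
  have key : ∀ j : Fin K, μ (Fin.castLE hK j) / ζ^2 ≤ ν j := by
    intro j
    set L : (Fin K → ℝ) →ₗ[ℝ] ({i : Fin K // j < i} → ℝ) :=
      LinearMap.pi (fun i => (LinearMap.proj i.val).comp (Matrix.mulVecLin W)) with hL
    have hdim : (j : ℕ) + 1 ≤ Module.finrank ℝ (LinearMap.ker L) := by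
      have h1 := LinearMap.finrank_range_add_finrank_ker L
      have h2 : Module.finrank ℝ (LinearMap.range L) ≤ Fintype.card {i : Fin K // j < i} :=
        le_trans (Submodule.finrank_le _) (by rw [Module.finrank_fintype_fun_eq_card])
      have h3 : Fintype.card {i : Fin K // j < i} = K - 1 - (j : ℕ) := by
        rw [Fintype.card_subtype]
        rw [show Finset.filter (fun x => j < x) Finset.univ = Finset.Ioi j by ext i; simp]
        exact Fin.card_Ioi j
      rw [Module.finrank_fintype_fun_eq_card, Fintype.card_fin] at h1
      have hjK : (j : ℕ) < K := j.2
      omega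
    have hc : ∀ x ∈ LinearMap.ker L,
        (μ (Fin.castLE hK j) / ζ^2) * (x ⬝ᵥ x) ≤ x ⬝ᵥ (((A * S)ᵀ * (A * S)) *ᵥ x) := by
      intro x hx
      have hzero : ∀ i : Fin K, j < i → (W *ᵥ x) i = 0 := by
        intro i hi
        have := congr_fun (LinearMap.mem_ker.mp hx) ⟨i, hi⟩
        simpa [hL] using this
      set z := W *ᵥ x with hz
      have step1 : x ⬝ᵥ (((A * S)ᵀ * (A * S)) *ᵥ x) = (S *ᵥ x) ⬝ᵥ ((Aᵀ * A) *ᵥ (S *ᵥ x)) := by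
        rw [show (A * S)ᵀ * (A * S) = Sᵀ * (Aᵀ * A) * S by
          rw [transpose_mul, Matrix.mul_assoc, Matrix.mul_assoc, ← Matrix.mul_assoc Aᵀ A S]]
        exact hlp1 S (Aᵀ * A) x
      have step2 : (S *ᵥ x) ⬝ᵥ ((V * D * Vᵀ) *ᵥ (S *ᵥ x)) = z ⬝ᵥ (D *ᵥ z) := by
        have hrw : V * D * Vᵀ = (Vᵀ)ᵀ * D * Vᵀ := by rw [transpose_transpose]
        have hzz : Vᵀ *ᵥ (S *ᵥ x) = z := by rw [mulVec_mulVec]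
        rw [hrw, hlp1, hzz]
      have step3 : z ⬝ᵥ (D *ᵥ z) = ∑ i, μ (Fin.castLE hK i) * (z i)^2 := by
        simp [hD, dotProduct, mulVec_diagonal, pow_two, mul_comm, mul_assoc, mul_left_comm]
      have step4 : ∑ i, μ (Fin.castLE hK i) * (z i)^2 ≥ μ (Fin.castLE hK j) * (z ⬝ᵥ z) := by
        rw [show z ⬝ᵥ z = ∑ i, (z i)^2 by simp only [dotProduct, pow_two], Finset.mul_sum]
        apply Finset.sum_le_sum
        intro i _
        by_cases hi : j < i
        · rw [hzero i hi]; simp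
        · refine mul_le_mul_of_nonneg_right (hμmono ?_) (sq_nonneg _)
          have hij : i ≤ j := not_lt.mp hi
          exact hij
      have step5 : (μ (Fin.castLE hK j) / ζ^2) * (x ⬝ᵥ x) ≤ μ (Fin.castLE hK j) * (z ⬝ᵥ z) := by
        have h6 := mul_le_mul_of_nonneg_left (hnorm x)
          (div_nonneg (hμnn j) (sq_nonneg ζ))
        calc (μ (Fin.castLE hK j) / ζ^2) * (x ⬝ᵥ x)
            ≤ (μ (Fin.castLE hK j) / ζ^2) * (ζ^2 * (z ⬝ᵥ z)) := h6
          _ = μ (Fin.castLE hK j) * (z ⬝ᵥ z) := by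
              rw [← mul_assoc, div_mul_cancel₀ _ (pow_ne_zero 2 hζpos.ne')]
      calc (μ (Fin.castLE hK j) / ζ^2) * (x ⬝ᵥ x)
          ≤ μ (Fin.castLE hK j) * (z ⬝ᵥ z) := step5
        _ ≤ ∑ i, μ (Fin.castLE hK i) * (z i)^2 := step4
        _ = z ⬝ᵥ (D *ᵥ z) := step3.symm
        _ = (S *ᵥ x) ⬝ᵥ ((V * D * Vᵀ) *ᵥ (S *ᵥ x)) := step2.symm
        _ ≤ (S *ᵥ x) ⬝ᵥ ((Aᵀ * A) *ᵥ (S *ᵥ x)) := hVDVt _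
        _ = x ⬝ᵥ (((A * S)ᵀ * (A * S)) *ᵥ x) := step1.symm
    exact cf_lower _ hHS ν hνmono f hf j (LinearMap.ker L) hdim _ hc
  constructor
  · intro j
    have h1 := key j
    have h2 : Real.sqrt (μ (Fin.castLE hK j) / ζ^2) ≤ Real.sqrt (ν j) := Real.sqrt_le_sqrt h1
    rwa [Real.sqrt_div (hμnn j), Real.sqrt_sq hζpos.le] at h2
  · -- determinant part
    have hmat : Sᵀ * (Aᵀ * A) * S = (A * S)ᵀ * (A * S) := by
      rw [transpose_mul]
      simp [Matrix.mul_assoc]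
    set U : Matrix (Fin K) (Fin K) ℝ := (hHS.eigenvectorUnitary : Matrix (Fin K) (Fin K) ℝ) with hU
    have hUU : U * star U = 1 := (Matrix.mem_unitaryGroup_iff).mp hHS.eigenvectorUnitary.2
    have hdet : (1 + Sᵀ * (Aᵀ * A) * S).det = ∏ i, (1 + hHS.eigenvalues i) := by
      have hspec := hHS.spectral_theorem
      rw [Unitary.conjStarAlgAut_apply] at hspec
      have hone : (1 : Matrix (Fin K) (Fin K) ℝ) = U * 1 * star U := by
        rw [mul_one, hUU]
      have hsum : 1 + Sᵀ * (Aᵀ * A) * S =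
          U * (1 + diagonal (RCLike.ofReal ∘ hHS.eigenvalues)) * star U := by
        rw [hmat, mul_add, add_mul, ← hone, ← hspec]
      rw [hsum, Matrix.det_mul, Matrix.det_mul]
      have hdu : U.det * (star U).det = 1 := by
        rw [← Matrix.det_mul, hUU, Matrix.det_one]
      have hdd : (1 + diagonal (RCLike.ofReal ∘ hHS.eigenvalues) :
          Matrix (Fin K) (Fin K) ℝ).det = ∏ i, (1 + hHS.eigenvalues i) := by
        rw [show (1 : Matrix (Fin K) (Fin K) ℝ) = diagonal (fun _ => 1) from (diagonal_one).symm,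
          diagonal_add, Matrix.det_diagonal]
        simp
      calc U.det * (1 + diagonal (RCLike.ofReal ∘ hHS.eigenvalues) :
              Matrix (Fin K) (Fin K) ℝ).det * (star U).det
          = (1 + diagonal (RCLike.ofReal ∘ hHS.eigenvalues) :
              Matrix (Fin K) (Fin K) ℝ).det * (U.det * (star U).det) := by
            ring
        _ = ∏ i, (1 + hHS.eigenvalues i) := by rw [hdu, mul_one, hdd]
    rw [hdet, Real.log_prod (fun i _ => by
      have : (0:ℝ) ≤ hHS.eigenvalues i := hASps.eigenvalues_nonneg i
      positivity)]
    rw [← Equiv.sum_comp f (fun i => Real.log (1 + hHS.eigenvalues i))]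
    apply Finset.sum_le_sum
    intro j _
    have h1 : (0:ℝ) < 1 + μ (Fin.castLE hK j) / ζ^2 := by
      have := div_nonneg (hμnn j) (sq_nonneg ζ)
      linarith
    apply Real.log_le_log h1
    have := key j
    have hν : ν j = hHS.eigenvalues (f j) := by rw [hf]; rfl
    rw [← hν]
    linarith
end
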